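/- Let Q be a connected wild quiver containing a cycle (oriented or not) of minimal length, with vertices x_1, …, x_l, and an extra arrow β : y → z with both y, z on the cycle. For each 4-element subset M ⊆ k, define a representation S(M) of Q that is k^4 at each cycle vertex, the identity on all cycle arrows except one arrow which acts by the diagonal matrix with diagonal M, the 4-cycle permutation matrix on β, and 0 elsewhere. Then S(M) is a brick (End S(M) = k), and Hom(S(M), S(M')) = 0 whenever M and M' are disjoint. -/
import Mathlib


private lemma fin_succ_mk {l v : ℕ} (h : v < l) :
    (⟨v, by omega⟩ : Fin (l + 1)) + 1 = ⟨v + 1, by omega⟩ := by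
  have h1 : ((1 : Fin (l + 1)) : ℕ) = 1 := by
    rw [Fin.val_one']; exact Nat.mod_eq_of_lt (by omega)
  apply Fin.ext
  rw [Fin.add_def]
  simp [h1]
  omega

private lemma fin_last_succ {l : ℕ} (h : 1 ≤ l) :
    (⟨l, by omega⟩ : Fin (l + 1)) + 1 = 0 := by
  have h1 : ((1 : Fin (l + 1)) : ℕ) = 1 := by
    rw [Fin.val_one']; exact Nat.mod_eq_of_lt (by omega)
  apply Fin.ext
  rw [Fin.add_def]
  simp [h1]

theorem aux_cycle {k : Type} [Field k]
    {V A : Type} {s t : A → V} {l : ℕ} (hl : 1 ≤ l)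
    {x : Fin (l + 1) → V}
    {a : Fin (l + 1) → A}
    (hcyc : ∀ i : Fin (l + 1),
        (s (a i) = x i ∧ t (a i) = x (i + 1)) ∨ (s (a i) = x (i + 1) ∧ t (a i) = x i))
    {β : A} {iy iz : Fin (l + 1)} (hsβ : s β = x iy) (htβ : t β = x iz)
    {M M' : Fin 4 → k}
    {SubSp : V → Submodule k (Fin 4 → k)}
    (hSubOn : ∀ v, v ∈ Set.range x → SubSp v = ⊤)
    {g g' : A → ((Fin 4 → k) →ₗ[k] (Fin 4 → k))}
    (hg0 : g (a 0) = Matrix.toLin' (Matrix.diagonal M))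
    (hg0' : g' (a 0) = Matrix.toLin' (Matrix.diagonal M'))
    (hgid : ∀ i : Fin (l + 1), i ≠ 0 → g (a i) = LinearMap.id)
    (hgid' : ∀ i : Fin (l + 1), i ≠ 0 → g' (a i) = LinearMap.id)
    (hgβ : g β = Matrix.toLin' (Matrix.of fun i j => if i = finRotate 4 j then (1 : k) else 0))
    (hgβ' : g' β = Matrix.toLin' (Matrix.of fun i j => if i = finRotate 4 j then (1 : k) else 0))
    (φ : V → ((Fin 4 → k) →ₗ[k] (Fin 4 → k)))
    (hφ : ∀ e : A, ∀ u ∈ SubSp (s e), φ (t e) (g e u) = g' e (φ (s e) u)) :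
    (∀ i, φ (x i) = φ (x 0)) ∧
    (LinearMap.toMatrix' (φ (x 0)) * Matrix.diagonal M
      = Matrix.diagonal M' * LinearMap.toMatrix' (φ (x 0))) ∧
    (∀ j : Fin 4, LinearMap.toMatrix' (φ (x 0)) (finRotate 4 j) (finRotate 4 j)
      = LinearMap.toMatrix' (φ (x 0)) j j) := by
  -- step lemma
  have hstep : ∀ i : Fin (l + 1), i ≠ 0 → φ (x i) = φ (x (i + 1)) := by
    intro i hi
    apply LinearMap.ext
    intro u
    rcases hcyc i with ⟨hs, ht⟩ | ⟨hs, ht⟩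
    · have h := hφ (a i) u (by rw [hs, hSubOn _ ⟨i, rfl⟩]; trivial)
      rw [hgid i hi, hgid' i hi, hs, ht] at h
      simpa using h.symm
    · have h := hφ (a i) u (by rw [hs, hSubOn _ ⟨i + 1, rfl⟩]; trivial)
      rw [hgid i hi, hgid' i hi, hs, ht] at h
      simpa using h
  have hall : ∀ i, φ (x i) = φ (x 0) := by
    have main : ∀ j : ℕ, j ≤ l → φ (x ⟨l - j, by omega⟩) = φ (x 0) := by
      intro j
      induction j with
      | zero =>
        intro _
        have h1 : ((⟨l - 0, by omega⟩ : Fin (l + 1)) : Fin (l + 1)) ≠ 0 := by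
          intro hcon
          have := congrArg Fin.val hcon
          simp at this
          omega
        have h2 : ((⟨l - 0, by omega⟩ : Fin (l + 1)) + 1) = 0 := by
          have := fin_last_succ (l := l) (by omega)
          simpa using this
        rw [hstep _ h1, h2]
      | succ n ih =>
        intro hn
        by_cases hc : l - (n + 1) = 0
        · have : ((⟨l - (n + 1), by omega⟩ : Fin (l + 1))) = 0 := by
            apply Fin.ext; simp [hc]
          rw [this]
        · have h1 : ((⟨l - (n + 1), by omega⟩ : Fin (l + 1))) ≠ 0 := by
            intro hcon
            have := congrArg Fin.val hcon
            simp at this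
            omega
          have h2 : ((⟨l - (n + 1), by omega⟩ : Fin (l + 1)) + 1) = ⟨l - n, by omega⟩ := by
            have := fin_succ_mk (l := l) (v := l - (n + 1)) (by omega)
            rw [this]
            apply Fin.ext
            simp
            omega
          rw [hstep _ h1, h2, ih (by omega)]
    intro i
    by_cases hi : i = 0
    · rw [hi]
    · have hiv : (i : ℕ) ≤ l := by omega
      have := main (l - i) (by omega)
      have he : ((⟨l - (l - (i : ℕ)), by omega⟩ : Fin (l + 1))) = i := by
        apply Fin.ext; simp; omega
      rwa [he] at this
  refine ⟨hall, ?_, ?_⟩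
  · -- commutation with diagonal
    have hcomm : (φ (x 0)) ∘ₗ Matrix.toLin' (Matrix.diagonal M)
        = Matrix.toLin' (Matrix.diagonal M') ∘ₗ (φ (x 0)) := by
      apply LinearMap.ext
      intro u
      rcases hcyc 0 with ⟨hs, ht⟩ | ⟨hs, ht⟩
      · have h := hφ (a 0) u (by rw [hs, hSubOn _ ⟨0, rfl⟩]; trivial)
        rw [hg0, hg0', hs, ht, hall (0 + 1)] at h
        simpa using h
      · have h := hφ (a 0) u (by rw [hs, hSubOn _ ⟨0 + 1, rfl⟩]; trivial)
        rw [hg0, hg0', hs, ht, hall (0 + 1)] at h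
        simpa using h
    have := congrArg LinearMap.toMatrix' hcomm
    simpa [LinearMap.toMatrix'_comp] using this
  · -- commutation with rotation matrix
    set P : Matrix (Fin 4) (Fin 4) k :=
      Matrix.of fun i j => if i = finRotate 4 j then (1 : k) else 0 with hP
    have hcomm : (φ (x 0)) ∘ₗ Matrix.toLin' P = Matrix.toLin' P ∘ₗ (φ (x 0)) := by
      apply LinearMap.ext
      intro u
      have h := hφ β u (by rw [hsβ, hSubOn _ ⟨iy, rfl⟩]; trivial)
      rw [hgβ, hgβ', hsβ, htβ, hall iy, hall iz] at h
      simpa using h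
    have hFP : LinearMap.toMatrix' (φ (x 0)) * P = P * LinearMap.toMatrix' (φ (x 0)) := by
      have := congrArg LinearMap.toMatrix' hcomm
      simpa [LinearMap.toMatrix'_comp] using this
    intro j
    have h := congrFun (congrFun hFP (finRotate 4 j)) j
    set F := LinearMap.toMatrix' (φ (x 0)) with hF
    have hl1 : (F * P) (finRotate 4 j) j = F (finRotate 4 j) (finRotate 4 j) := by
      simp [Matrix.mul_apply, hP, mul_ite]
    have hl2 : (P * F) (finRotate 4 j) j = F j j := by
      simp [Matrix.mul_apply, hP, ite_mul]
    rw [hl1, hl2] at h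
    exact h

section Helpers

private lemma scalar_of_comm {k : Type} [Field k] {M : Fin 4 → k} (hM : Function.Injective M)
    {F : Matrix (Fin 4) (Fin 4) k}
    (hFD : F * Matrix.diagonal M = Matrix.diagonal M * F)
    (hrot : ∀ j : Fin 4, F (finRotate 4 j) (finRotate 4 j) = F j j) :
    F = F 0 0 • (1 : Matrix (Fin 4) (Fin 4) k) := by
  have hent : ∀ i j, F i j * M j = M i * F i j := by
    intro i j
    have := congrFun (congrFun hFD i) j
    simpa [Matrix.mul_diagonal, Matrix.diagonal_mul] using this
  have hoff : ∀ i j, i ≠ j → F i j = 0 := by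
    intro i j hij
    have h := hent i j
    have hne : M j ≠ M i := fun hc => hij (hM hc).symm
    have : F i j * (M j - M i) = 0 := by ring_nf; linear_combination h
    rcases mul_eq_zero.mp this with h0 | h0
    · exact h0
    · exact absurd (sub_eq_zero.mp h0) hne
  have h10 : F 1 1 = F 0 0 := by simpa using hrot 0
  have h21 : F 2 2 = F 1 1 := by simpa using hrot 1
  have h32 : F 3 3 = F 2 2 := by simpa using hrot 2
  have hdiag : ∀ i : Fin 4, F i i = F 0 0 := by
    intro i
    fin_cases i
    · rfl
    · exact h10
    · exact h21.trans h10
    · exact (h32.trans h21).trans h10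
  ext i j
  by_cases hij : i = j
  · subst hij
    simp [Matrix.one_apply, hdiag i]
  · simp [Matrix.one_apply, hij, hoff i j hij]

private lemma zero_of_comm {k : Type} [Field k] {M M' : Fin 4 → k}
    (hd : Disjoint (Set.range M) (Set.range M'))
    {F : Matrix (Fin 4) (Fin 4) k}
    (hFD : F * Matrix.diagonal M = Matrix.diagonal M' * F) :
    F = 0 := by
  ext i j
  have h := congrFun (congrFun hFD i) j
  simp [Matrix.mul_diagonal, Matrix.diagonal_mul] at h
  have hne : M j ≠ M' i := by
    intro hc
    exact Set.disjoint_left.mp hd ⟨j, rfl⟩ ⟨i, hc.symm⟩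
  have : F i j * (M j - M' i) = 0 := by linear_combination h
  rcases mul_eq_zero.mp this with h0 | h0
  · simpa using h0
  · exact absurd (sub_eq_zero.mp h0) hne

end Helpers


/-- Let `Q = (V, A, s, t)` be a (connected wild) quiver containing a
cycle — oriented or not — of minimal length with (pairwise distinct) vertices
`x 0, …, x l` and arrows `a 0, …, a l`, together with an extra arrow `β : y → z` whose
endpoints both lie on the cycle.  For a 4-element subset `M ⊆ k` (an injective
`M : Fin 4 → k`), let `S(M)` be the representation of `Q` which is `k⁴` at each cycle
vertex and `0` elsewhere (encoded by the subspaces `SubSp v ⊆ k⁴`), is the identity on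
all cycle arrows except `a 0`, which acts by the diagonal matrix with diagonal `M`, is
the 4-cycle permutation matrix on `β`, and `0` on all other arrows.  Then `S(M)` is a
brick, and `Hom(S(M), S(M')) = 0` whenever `M` and `M'` have disjoint ranges. -/
theorem cycle_representation_brick_and_orthogonal
    (k : Type) [Field k] [IsAlgClosed k]
    (V A : Type) (s t : A → V) (l : ℕ) (hl : 1 ≤ l)
    (x : Fin (l + 1) → V) (hx : Function.Injective x)
    (a : Fin (l + 1) → A) (ha : Function.Injective a)
    -- each cycle arrow joins consecutive cycle vertices, in one of the two directions
    (hcyc : ∀ i : Fin (l + 1),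
        (s (a i) = x i ∧ t (a i) = x (i + 1)) ∨ (s (a i) = x (i + 1) ∧ t (a i) = x i))
    -- the extra arrow β, distinct from the cycle arrows, with both endpoints on the cycle
    (β : A) (hβ : ∀ i, β ≠ a i) (iy iz : Fin (l + 1)) (hsβ : s β = x iy) (htβ : t β = x iz)
    -- the two 4-element subsets of k
    (M M' : Fin 4 → k) (hM : Function.Injective M) (hM' : Function.Injective M')
    -- the common vertex spaces: k⁴ on the cycle, 0 elsewhere
    (SubSp : V → Submodule k (Fin 4 → k))
    (hSubOn : ∀ v, v ∈ Set.range x → SubSp v = ⊤)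
    (hSubOff : ∀ v, v ∉ Set.range x → SubSp v = ⊥)
    -- the arrow maps of S(M) and S(M')
    (g g' : A → ((Fin 4 → k) →ₗ[k] (Fin 4 → k)))
    (hg0 : g (a 0) = Matrix.toLin' (Matrix.diagonal M))
    (hg0' : g' (a 0) = Matrix.toLin' (Matrix.diagonal M'))
    (hgid : ∀ i : Fin (l + 1), i ≠ 0 → g (a i) = LinearMap.id)
    (hgid' : ∀ i : Fin (l + 1), i ≠ 0 → g' (a i) = LinearMap.id)
    (hgβ : g β = Matrix.toLin' (Matrix.of fun i j => if i = finRotate 4 j then (1 : k) else 0))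
    (hgβ' : g' β = Matrix.toLin' (Matrix.of fun i j => if i = finRotate 4 j then (1 : k) else 0))
    (hgout : ∀ e : A, e ∉ Set.range a → e ≠ β → g e = 0)
    (hgout' : ∀ e : A, e ∉ Set.range a → e ≠ β → g' e = 0) :
    -- (1) S(M) is a brick: every endomorphism is a scalar
    (∀ φ : V → ((Fin 4 → k) →ₗ[k] (Fin 4 → k)),
        (∀ e : A, ∀ u ∈ SubSp (s e), φ (t e) (g e u) = g e (φ (s e) u)) →
        ∃ c : k, ∀ v : V, ∀ u ∈ SubSp v, φ v u = c • u) ∧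
    -- (2) Hom(S(M), S(M')) = 0 when M and M' are disjoint
    (Disjoint (Set.range M) (Set.range M') →
      ∀ φ : V → ((Fin 4 → k) →ₗ[k] (Fin 4 → k)),
        (∀ e : A, ∀ u ∈ SubSp (s e), φ (t e) (g e u) = g' e (φ (s e) u)) →
        ∀ v : V, ∀ u ∈ SubSp v, φ v u = 0) := by
  constructor
  · -- (1) brick
    intro φ hφ
    obtain ⟨hall, hFD, hrot⟩ :=
      aux_cycle hl hcyc hsβ htβ hSubOn hg0 hg0 hgid hgid hgβ hgβ φ hφ
    set F := LinearMap.toMatrix' (φ (x 0)) with hF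
    have hFc : F = F 0 0 • (1 : Matrix (Fin 4) (Fin 4) k) := scalar_of_comm hM hFD hrot
    set c := F 0 0 with hc
    have hφ0 : φ (x 0) = c • LinearMap.id := by
      have h1 : φ (x 0) = Matrix.toLin' F := (Matrix.toLin'_toMatrix' _).symm
      rw [h1, hFc, map_smul, Matrix.toLin'_one]
    refine ⟨c, ?_⟩
    intro v u hu
    by_cases hv : v ∈ Set.range x
    · obtain ⟨i, rfl⟩ := hv
      rw [hall i, hφ0]
      simp
    · rw [hSubOff v hv] at hu
      have : u = 0 := by simpa using hu
      simp [this]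
  · -- (2) orthogonality
    intro hdisj φ hφ
    obtain ⟨hall, hFD, _⟩ :=
      aux_cycle hl hcyc hsβ htβ hSubOn hg0 hg0' hgid hgid' hgβ hgβ' φ hφ
    have hF0 : LinearMap.toMatrix' (φ (x 0)) = 0 := zero_of_comm hdisj hFD
    have hφ0 : φ (x 0) = 0 := by
      have h1 : φ (x 0) = Matrix.toLin' (LinearMap.toMatrix' (φ (x 0))) :=
        (Matrix.toLin'_toMatrix' _).symm
      rw [h1, hF0, map_zero]
    intro v u hu
    by_cases hv : v ∈ Set.range x
    · obtain ⟨i, rfl⟩ := hv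
      rw [hall i, hφ0]
      simp
    · rw [hSubOff v hv] at hu
      have : u = 0 := by simpa using hu
      simp [this]
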